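/- Let (Ω,ℬ,μ) be a standard (Lebesgue) probability space and τ : Ω → Ω an invertible measure-preserving transformation (τ is a bijection with τ and τ⁻¹ measurable and measure preserving) which is aperiodic, i.e., μ({x ∈ Ω : τ^p x = x for some integer p ≥ 1}) = 0. Then for every integer n ≥ 1 and every ε > 0 there exists A ∈ ℬ such that A, τ⁻¹(A), …, τ^{-(n-1)}(A) are pairwise disjoint and μ(Ω ∖ ⋃_{i=0}^{n-1} τ^{-i}(A)) < ε. -/

import Mathlib

open MeasureTheory Set ENNReal

section RokhlinAux
variable {Ω : Type*} [MeasurableSpace Ω]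

/-- Iterated measure preservation. -/
lemma iter_mp (μ : Measure Ω) (τ : Ω → Ω) (hτ : Measurable τ)
    (hmp : ∀ A : Set Ω, MeasurableSet A → μ (τ ⁻¹' A) = μ A) :
    ∀ (k : ℕ) (A : Set Ω), MeasurableSet A → μ (τ^[k] ⁻¹' A) = μ A := by
  intro k
  induction k with
  | zero => intro A _; simp
  | succ k ih =>
    intro A hA
    rw [Function.iterate_succ, Set.preimage_comp]
    rw [hmp _ ((hτ.iterate k) hA)]
    exact ih A hA

/-- Existence of a positive-measure set inside `S` with disjoint iterates. -/
lemma exists_disjoint_base [StandardBorelSpace Ω] (μ : Measure Ω)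
    (τ : Ω → Ω) (hτ : Measurable τ) (N : ℕ)
    (hper : μ {x | ∃ k, 1 ≤ k ∧ k < N ∧ τ^[k] x = x} = 0)
    (S : Set Ω) (hS : MeasurableSet S) (hSpos : 0 < μ S) :
    ∃ B : Set Ω, MeasurableSet B ∧ B ⊆ S ∧ 0 < μ B ∧
      ∀ k, 1 ≤ k → k < N → B ∩ τ^[k] ⁻¹' B = ∅ := by
  obtain ⟨f, hf⟩ := exists_measurableEmbedding_real Ω
  set E : ℚ × ℚ → Set Ω := fun p => f ⁻¹' (Set.Ioo (p.1 : ℝ) (p.2 : ℝ)) with hE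
  have hEm : ∀ p, MeasurableSet (E p) := fun p => hf.measurable measurableSet_Ioo
  set D : ℚ × ℚ → Set Ω :=
    fun p => (S ∩ E p) \ ⋃ k ∈ Finset.Ico 1 N, τ^[k] ⁻¹' (E p) with hD
  have hDm : ∀ p, MeasurableSet (D p) := by
    intro p
    exact (hS.inter (hEm p)).diff
      (MeasurableSet.biUnion (Finset.Ico 1 N).countable_toSet
        (fun k _ => (hτ.iterate k) (hEm p)))
  -- covering claim
  have hcov : S ⊆ (⋃ p : ℚ × ℚ, D p) ∪ {x | ∃ k, 1 ≤ k ∧ k < N ∧ τ^[k] x = x} := by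
    intro x hx
    by_cases hxp : ∃ k, 1 ≤ k ∧ k < N ∧ τ^[k] x = x
    · exact Or.inr hxp
    push_neg at hxp
    left
    -- the finite set of values to avoid
    set F : Finset ℝ := (Finset.Ico 1 N).image (fun k => f (τ^[k] x)) with hF
    have hfx : f x ∉ F := by
      intro hmem
      rw [hF, Finset.mem_image] at hmem
      obtain ⟨k, hk, hfk⟩ := hmem
      rw [Finset.mem_Ico] at hk
      exact hxp k hk.1 hk.2 (hf.injective hfk)
    -- get a positive distance
    have hδ : ∃ δ : ℝ, 0 < δ ∧ ∀ y ∈ F, δ ≤ |y - f x| := by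
      by_cases hFne : F.Nonempty
      · refine ⟨F.inf' hFne (fun y => |y - f x|), ?_, ?_⟩
        · rw [Finset.lt_inf'_iff]
          intro y hy
          rw [abs_pos, sub_ne_zero]
          intro h; exact hfx (h ▸ hy)
        · intro y hy; exact Finset.inf'_le _ hy
      · exact ⟨1, one_pos, fun y hy => absurd ⟨y, hy⟩ hFne⟩
    obtain ⟨δ, hδpos, hδle⟩ := hδ
    obtain ⟨q, hq1, hq2⟩ := exists_rat_btwn (show f x - δ < f x by linarith)
    obtain ⟨r, hr1, hr2⟩ := exists_rat_btwn (show f x < f x + δ by linarith)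
    refine mem_iUnion.2 ⟨(q, r), ⟨⟨hx, ⟨hq2, hr1⟩⟩, ?_⟩⟩
    intro hmem
    rw [Set.mem_iUnion₂] at hmem
    obtain ⟨k, hk, hkE⟩ := hmem
    rw [Finset.mem_Ico] at hk
    have h1 : f (τ^[k] x) ∈ Set.Ioo (q : ℝ) (r : ℝ) := hkE
    have h2 : f (τ^[k] x) ∈ F := Finset.mem_image_of_mem _ (Finset.mem_Ico.2 hk)
    have h3 := hδle _ h2
    have h4 : |f (τ^[k] x) - f x| < δ := by
      rw [abs_sub_lt_iff]
      exact ⟨by linarith [h1.2], by linarith [h1.1]⟩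
    linarith
  -- some D p has positive measure
  have hpos : ∃ p : ℚ × ℚ, 0 < μ (D p) := by
    by_contra hcon
    push_neg at hcon
    have hzero : ∀ p : ℚ × ℚ, μ (D p) = 0 := fun p => le_antisymm (hcon p) zero_le
    have hnull : μ (⋃ p : ℚ × ℚ, D p) = 0 := measure_iUnion_null hzero
    have : μ S = 0 := by
      apply le_antisymm _ zero_le
      calc μ S ≤ μ ((⋃ p : ℚ × ℚ, D p) ∪ {x | ∃ k, 1 ≤ k ∧ k < N ∧ τ^[k] x = x}) :=
            measure_mono (μ := μ) hcov
        _ ≤ μ (⋃ p : ℚ × ℚ, D p) + μ {x | ∃ k, 1 ≤ k ∧ k < N ∧ τ^[k] x = x} := measure_union_le _ _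
        _ = 0 := by rw [hnull, hper, add_zero]
    exact absurd this (ne_of_gt hSpos)
  obtain ⟨p, hp⟩ := hpos
  refine ⟨D p, hDm p, fun x hx => hx.1.1, hp, ?_⟩
  intro k hk1 hk2
  rw [Set.eq_empty_iff_forall_notMem]
  rintro x ⟨hxD, hxP⟩
  have hτx : τ^[k] x ∈ E p := hxP.1.2
  exact hxD.2 (Set.mem_biUnion (Finset.mem_Ico.2 ⟨hk1, hk2⟩) hτx)

/-- A maximal base: disjoint iterates, and its two-sided `N`-window covers a.e. -/
lemma exists_maximal_base [StandardBorelSpace Ω] (μ : Measure Ω) [IsProbabilityMeasure μ]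
    (τ σ : Ω → Ω) (hτ : Measurable τ) (hσ : Measurable σ)
    (hστ : Function.LeftInverse σ τ) (N : ℕ) (hN : 1 ≤ N)
    (hper : μ {x | ∃ k, 1 ≤ k ∧ k < N ∧ τ^[k] x = x} = 0) :
    ∃ B : Set Ω, MeasurableSet B ∧ (∀ k, 1 ≤ k → k < N → B ∩ τ^[k] ⁻¹' B = ∅) ∧
      μ (univ \ ⋃ k ∈ Finset.range N, (τ^[k] ⁻¹' B ∪ σ^[k] ⁻¹' B)) = 0 := by
  classical
  set Adm : Set Ω → Prop :=
    fun B => MeasurableSet B ∧ ∀ k, 1 ≤ k → k < N → B ∩ τ^[k] ⁻¹' B = ∅ with hAdm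
  set L : Set Ω → Set Ω :=
    fun B => univ \ ⋃ k ∈ Finset.range N, (τ^[k] ⁻¹' B ∪ σ^[k] ⁻¹' B) with hL
  have hLm : ∀ B, MeasurableSet B → MeasurableSet (L B) := by
    intro B hB
    exact MeasurableSet.univ.diff (MeasurableSet.biUnion (Finset.range N).countable_toSet
      (fun k _ => ((hτ.iterate k) hB).union ((hσ.iterate k) hB)))
  have hLB : ∀ B, Disjoint (L B) B := by
    intro B
    rw [Set.disjoint_right]
    intro x hx hxL
    refine hxL.2 (Set.mem_biUnion (Finset.mem_range.2 hN) ?_)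
    exact Or.inl (by simpa using hx)
  have hLanti : ∀ B C : Set Ω, B ⊆ C → L C ⊆ L B := by
    intro B C hBC x hx
    refine ⟨trivial, fun hmem => hx.2 ?_⟩
    rw [Set.mem_iUnion₂] at hmem ⊢
    obtain ⟨k, hk, hkm⟩ := hmem
    exact ⟨k, hk, hkm.imp (fun h => Set.preimage_mono hBC h) (fun h => Set.preimage_mono hBC h)⟩
  -- union of an admissible set and an admissible subset of its leftover is admissible
  have hAdmUnion : ∀ B C : Set Ω, Adm B → Adm C → C ⊆ L B → Adm (B ∪ C) := by
    intro B C hB hC hCL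
    refine ⟨hB.1.union hC.1, ?_⟩
    intro k hk1 hk2
    rw [Set.eq_empty_iff_forall_notMem]
    rintro x ⟨hx1, hx2⟩
    rw [Set.mem_preimage, Set.mem_union] at hx2
    cases hx1 with
    | inl hxB =>
      cases hx2 with
      | inl h =>
        have he := hB.2 k hk1 hk2
        rw [Set.eq_empty_iff_forall_notMem] at he
        exact he x ⟨hxB, h⟩
      | inr h =>
        -- τ^[k] x ∈ C ⊆ L B, so τ^[k] x ∉ σ^[k] ⁻¹' B, but σ^[k] (τ^[k] x) = x ∈ B
        have hmem := hCL h
        refine hmem.2 (Set.mem_biUnion (Finset.mem_range.2 hk2) (Or.inr ?_))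
        rw [Set.mem_preimage, (hστ.iterate k) x]
        exact hxB
    | inr hxC =>
      cases hx2 with
      | inl h =>
        have hmem := hCL hxC
        exact hmem.2 (Set.mem_biUnion (Finset.mem_range.2 hk2) (Or.inl h))
      | inr h =>
        have : x ∈ C ∩ τ^[k] ⁻¹' C := ⟨hxC, h⟩
        rw [hC.2 k hk1 hk2] at this
        exact this
  have hAdmEmpty : Adm (∅ : Set Ω) := ⟨MeasurableSet.empty, fun k _ _ => by simp⟩
  -- the sup of measures of admissible subsets of the leftover
  set s : Set Ω → ℝ≥0∞ := fun B => ⨆ (C : Set Ω) (_ : Adm C ∧ C ⊆ L B), μ C with hs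
  have hstep : ∀ B : Set Ω, Adm B → ∃ C, Adm C ∧ C ⊆ L B ∧ s B ≤ 2 * μ C := by
    intro B hB
    by_cases h0 : s B = 0
    · exact ⟨∅, hAdmEmpty, Set.empty_subset _, by simp [h0]⟩
    · have hfin : s B ≠ ⊤ := by
        have : s B ≤ 1 := by
          rw [hs]
          refine iSup₂_le ?_
          intro C _
          simpa using prob_le_one (μ := μ) (s := C)
        exact ne_top_of_le_ne_top one_ne_top this
      have hlt : s B / 2 < s B := ENNReal.half_lt_self h0 hfin
      have hlt2 : s B / 2 < ⨆ (C : Set Ω) (_ : Adm C ∧ C ⊆ L B), μ C := hlt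
      obtain ⟨C, hCmeas⟩ := lt_iSup_iff.1 hlt2
      obtain ⟨⟨hCAdm, hCL⟩, hCm⟩ := lt_iSup_iff.1 hCmeas
      refine ⟨C, hCAdm, hCL, ?_⟩
      have : s B = 2 * (s B / 2) := by
        rw [ENNReal.mul_div_cancel (two_ne_zero) (ENNReal.ofNat_ne_top)]
      rw [this]
      exact mul_le_mul_right (le_of_lt hCm) 2
  choose step hstep1 hstep2 hstep3 using hstep
  -- build the increasing sequence
  let seq : ℕ → {B : Set Ω // Adm B} := fun m =>
    Nat.rec ⟨∅, hAdmEmpty⟩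
      (fun _ p => ⟨p.1 ∪ step p.1 p.2,
        hAdmUnion p.1 _ p.2 (hstep1 p.1 p.2) (hstep2 p.1 p.2)⟩) m
  have hseqsucc : ∀ m, (seq (m+1)).1 = (seq m).1 ∪ step (seq m).1 (seq m).2 := fun m => rfl
  have hmono : ∀ i j, i ≤ j → (seq i).1 ⊆ (seq j).1 := by
    intro i j hij
    induction j with
    | zero => rw [Nat.le_zero.1 hij]
    | succ j ih =>
      rcases Nat.lt_or_ge i (j+1) with h | h
      · refine subset_trans (ih (Nat.lt_succ_iff.1 h)) ?_
        rw [hseqsucc]; exact Set.subset_union_left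
      · rw [Nat.le_antisymm hij h]
  set Binf : Set Ω := ⋃ m, (seq m).1 with hBinf
  have hBinfAdm : Adm Binf := by
    constructor
    · exact MeasurableSet.iUnion (fun m => (seq m).2.1)
    · intro k hk1 hk2
      rw [Set.eq_empty_iff_forall_notMem]
      rintro x ⟨hx1, hx2⟩
      rw [Set.mem_preimage, hBinf, Set.mem_iUnion] at hx2
      rw [hBinf, Set.mem_iUnion] at hx1
      obtain ⟨i, hi⟩ := hx1
      obtain ⟨j, hj⟩ := hx2
      have hxi : x ∈ (seq (max i j)).1 := hmono i _ (le_max_left i j) hi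
      have hxj : τ^[k] x ∈ (seq (max i j)).1 := hmono j _ (le_max_right i j) hj
      have := (seq (max i j)).2.2 k hk1 hk2
      rw [Set.eq_empty_iff_forall_notMem] at this
      exact this x ⟨hxi, hxj⟩
  refine ⟨Binf, hBinfAdm.1, hBinfAdm.2, ?_⟩
  by_contra hpos
  have hLpos : 0 < μ (L Binf) := pos_iff_ne_zero.2 hpos
  obtain ⟨C, hCmeas, hCsub, hCpos, hCd⟩ :=
    exists_disjoint_base μ τ hτ N hper (L Binf) (hLm Binf hBinfAdm.1) hLpos
  have hCAdm : Adm C := ⟨hCmeas, hCd⟩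
  -- C is a candidate inside every L (seq i)
  have hcand : ∀ m, μ C ≤ s (seq m).1 := by
    intro m
    have hsub : C ⊆ L (seq m).1 :=
      subset_trans hCsub (hLanti _ _ (Set.iUnion_subset_iff.1 (subset_refl Binf) m))
    rw [hs]
    exact le_iSup₂_of_le C ⟨hCAdm, hsub⟩ le_rfl
  -- the chosen pieces have measure ≥ μ C / 2 and are pairwise disjoint
  set D : ℕ → Set Ω := fun m => step (seq m).1 (seq m).2 with hDdef
  have hDge : ∀ m, μ C / 2 ≤ μ (D m) := by
    intro m
    have h1 : μ C ≤ 2 * μ (D m) := le_trans (hcand m) (hstep3 _ _)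
    rw [ENNReal.div_le_iff two_ne_zero ENNReal.ofNat_ne_top]
    rwa [mul_comm]
  have hDsub : ∀ m, D m ⊆ (seq (m+1)).1 := by
    intro m; rw [hseqsucc]; exact Set.subset_union_right
  have hkey : ∀ i j, i < j → Disjoint (D i) (D j) := by
    intro i j hlt
    have h1 : D i ⊆ (seq j).1 := subset_trans (hDsub i) (hmono _ _ hlt)
    have h2 : D j ⊆ L (seq j).1 := hstep2 _ _
    exact Set.disjoint_of_subset h1 h2 ((hLB (seq j).1).symm)
  have hDdisj : Pairwise (Function.onFun Disjoint (fun m => D m)) := by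
    intro i j hij
    rcases lt_or_gt_of_ne hij with h | h
    · exact hkey i j h
    · exact (hkey j i h).symm
  have hDmeas : ∀ m, MeasurableSet (D m) := fun m => (hstep1 _ _).1
  have hsum : ∑' m, μ (D m) = μ (⋃ m, D m) := (measure_iUnion hDdisj hDmeas).symm
  have hfin : ∑' m, μ (D m) ≠ ⊤ := by
    rw [hsum]
    exact ne_top_of_le_ne_top one_ne_top (prob_le_one)
  have htend := ENNReal.tendsto_atTop_zero_of_tsum_ne_top hfin
  have hC2 : 0 < μ C / 2 := ENNReal.div_pos (ne_of_gt hCpos) ENNReal.ofNat_ne_top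
  obtain ⟨m, hm⟩ := (Filter.eventually_atTop.1 (htend.eventually_lt_const hC2)).imp
    (fun m h => h m le_rfl)
  exact absurd (hDge m) (not_le.2 hm)


end RokhlinAux

/-- **Rokhlin's lemma:** an aperiodic invertible measure-preserving transformation of a
standard probability space admits, for every `n ≥ 1` and `ε > 0`, a measurable set `A`
whose first `n` preimage-iterates are pairwise disjoint and cover `Ω` up to measure `ε`. -/
theorem rokhlin_lemma_aperiodic {Ω : Type*} [MeasurableSpace Ω] [StandardBorelSpace Ω]
    (μ : Measure Ω) [IsProbabilityMeasure μ]
    (τ σ : Ω → Ω) (hτ : Measurable τ) (hσ : Measurable σ)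
    (hστ : Function.LeftInverse σ τ) (hτσ : Function.RightInverse σ τ)
    (hmpτ : ∀ A : Set Ω, MeasurableSet A → μ (τ ⁻¹' A) = μ A)
    (hmpσ : ∀ A : Set Ω, MeasurableSet A → μ (σ ⁻¹' A) = μ A)
    (hap : μ {x : Ω | ∃ p : ℕ, 1 ≤ p ∧ τ^[p] x = x} = 0)
    (n : ℕ) (hn : 1 ≤ n) (ε : ℝ) (hε : 0 < ε) :
    ∃ A : Set Ω, MeasurableSet A ∧
      (∀ i j : ℕ, i < n → j < n → i ≠ j → Disjoint (τ^[i] ⁻¹' A) (τ^[j] ⁻¹' A)) ∧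
      μ (univ \ ⋃ i ∈ Finset.range n, τ^[i] ⁻¹' A) < ENNReal.ofReal ε := by
  classical
  -- choose N large
  obtain ⟨N, hNgt⟩ := exists_nat_gt ((n : ℝ) / ε)
  have hNpos : 0 < N := by
    have h1 : (0 : ℝ) < (n : ℝ) / ε := div_pos (by exact_mod_cast hn) hε
    have h2 : (0 : ℝ) < N := lt_trans h1 hNgt
    exact_mod_cast h2
  have hper : μ {x | ∃ k, 1 ≤ k ∧ k < N ∧ τ^[k] x = x} = 0 := by
    refine measure_mono_null ?_ hap
    intro x ⟨k, hk1, _, hk3⟩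
    exact ⟨k, hk1, hk3⟩
  obtain ⟨B, hBmeas, hBdisj, hBmax⟩ :=
    exists_maximal_base μ τ σ hτ hσ hστ N hNpos hper
  -- the forward-sweep set V and its complement W
  set V : Set Ω := ⋃ k : ℕ, τ^[k] ⁻¹' B with hV
  have hVmeas : MeasurableSet V := MeasurableSet.iUnion (fun k => (hτ.iterate k) hBmeas)
  have hBV : ∀ k : ℕ, τ^[k] ⁻¹' B ⊆ V := fun k => Set.subset_iUnion (fun k => τ^[k] ⁻¹' B) k
  have hBsubV : B ⊆ V := by have := hBV 0; simpa using this
  have hτV : ∀ (k : ℕ) (x : Ω), τ^[k] x ∈ V → x ∈ V := by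
    intro k x hx
    rw [hV, Set.mem_iUnion] at hx ⊢
    obtain ⟨j, hj⟩ := hx
    refine ⟨j + k, ?_⟩
    rw [Set.mem_preimage, Function.iterate_add_apply]
    exact hj
  have hVσ : V ⊆ σ ⁻¹' V := by
    intro x hx
    rw [hV, Set.mem_iUnion] at hx
    obtain ⟨j, hj⟩ := hx
    rw [Set.mem_preimage, hV, Set.mem_iUnion]
    refine ⟨j + 1, ?_⟩
    rw [Set.mem_preimage, Function.iterate_succ_apply, hτσ x]
    exact hj
  have hσVnull : ∀ k : ℕ, μ (σ^[k] ⁻¹' V \ V) = 0 := by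
    have h1 : μ (σ ⁻¹' V \ V) = 0 := by
      rw [measure_diff hVσ (hVmeas.nullMeasurableSet) (measure_ne_top μ V),
        hmpσ V hVmeas, tsub_self]
    intro k
    induction k with
    | zero => simp
    | succ k ih =>
      have hsub : σ^[k+1] ⁻¹' V \ V ⊆ σ^[k] ⁻¹' (σ ⁻¹' V \ V) ∪ (σ^[k] ⁻¹' V \ V) := by
        intro x ⟨hx1, hx2⟩
        rw [Set.mem_preimage, Function.iterate_succ_apply'] at hx1
        by_cases hc : σ^[k] x ∈ V
        · exact Or.inr ⟨hc, hx2⟩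
        · exact Or.inl (show σ^[k] x ∈ σ ⁻¹' V \ V from ⟨hx1, hc⟩)
      refine measure_mono_null hsub (le_antisymm ?_ zero_le)
      calc μ (σ^[k] ⁻¹' (σ ⁻¹' V \ V) ∪ (σ^[k] ⁻¹' V \ V))
          ≤ μ (σ^[k] ⁻¹' (σ ⁻¹' V \ V)) + μ (σ^[k] ⁻¹' V \ V) := measure_union_le _ _
        _ = 0 := by
            rw [iter_mp μ σ hσ hmpσ k _ ((hσ hVmeas).diff hVmeas), h1, ih, add_zero]
  -- W = complement of V is null
  have hWnull : μ (univ \ V) = 0 := by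
    have hsub : univ \ V ⊆
        (⋃ k ∈ Finset.range N, ((τ^[k] ⁻¹' B ∪ σ^[k] ⁻¹' B) ∩ (univ \ V))) ∪
        (univ \ ⋃ k ∈ Finset.range N, (τ^[k] ⁻¹' B ∪ σ^[k] ⁻¹' B)) := by
      intro x hx
      by_cases hc : x ∈ ⋃ k ∈ Finset.range N, (τ^[k] ⁻¹' B ∪ σ^[k] ⁻¹' B)
      · left
        rw [Set.mem_iUnion₂] at hc ⊢
        obtain ⟨k, hk, hkm⟩ := hc
        exact ⟨k, hk, hkm, hx⟩
      · exact Or.inr ⟨trivial, hc⟩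
    refine le_antisymm ?_ zero_le
    calc μ (univ \ V)
        ≤ μ (⋃ k ∈ Finset.range N, ((τ^[k] ⁻¹' B ∪ σ^[k] ⁻¹' B) ∩ (univ \ V))) +
          μ (univ \ ⋃ k ∈ Finset.range N, (τ^[k] ⁻¹' B ∪ σ^[k] ⁻¹' B)) :=
          le_trans (measure_mono hsub) (measure_union_le _ _)
      _ = 0 := by
          rw [hBmax, add_zero]
          refine le_antisymm (le_trans (measure_biUnion_finset_le _ _) ?_) zero_le
          refine le_of_eq (Finset.sum_eq_zero ?_)
          intro k _
          have hss : (τ^[k] ⁻¹' B ∪ σ^[k] ⁻¹' B) ∩ (univ \ V) ⊆ σ^[k] ⁻¹' V \ V := by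
            rintro x ⟨hx1, hx2⟩
            cases hx1 with
            | inl h => exact absurd (hBV k h) hx2.2
            | inr h => exact ⟨Set.preimage_mono hBsubV h, hx2.2⟩
          exact measure_mono_null hss (hσVnull k)
  -- the height decomposition of V
  set H : ℕ → Set Ω := fun m => τ^[m] ⁻¹' B \ ⋃ j ∈ Finset.range m, τ^[j] ⁻¹' B with hH
  have hHmem : ∀ (m : ℕ) (x : Ω), x ∈ H m ↔ (τ^[m] x ∈ B ∧ ∀ j, j < m → τ^[j] x ∉ B) := by
    intro m x
    rw [hH]
    simp only [Set.mem_diff, Set.mem_preimage, Set.mem_iUnion, Finset.mem_range, not_exists]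
  have hHmeas : ∀ m, MeasurableSet (H m) := by
    intro m
    exact ((hτ.iterate m) hBmeas).diff
      (MeasurableSet.biUnion (Finset.range m).countable_toSet
        (fun j _ => (hτ.iterate j) hBmeas))
  have hHuniq : ∀ (m m' : ℕ) (x : Ω), x ∈ H m → x ∈ H m' → m = m' := by
    intro m m' x hm hm'
    rw [hHmem] at hm hm'
    by_contra hne
    rcases Nat.lt_or_ge m m' with h | h
    · exact hm'.2 m h hm.1
    · exact hm.2 m' (lt_of_le_of_ne h (Ne.symm hne)) hm'.1
  -- the composition helper: σ^[m] (τ^[d] y) = τ^[d-m] y for m ≤ d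
  have hcomp : ∀ (m d : ℕ) (y : Ω), m ≤ d → σ^[m] (τ^[d] y) = τ^[d-m] y := by
    intro m d y hmd
    have h1 : τ^[d] y = τ^[m] (τ^[d-m] y) := by
      rw [← Function.iterate_add_apply, Nat.add_sub_cancel' hmd]
    rw [h1, (hστ.iterate m) (τ^[d-m] y)]
  -- the Rokhlin base
  set A : Set Ω := (⋃ q : ℕ, H (n * q)) \ ⋃ m ∈ Finset.Ico 1 n, σ^[m] ⁻¹' B with hA
  have hAmeas : MeasurableSet A := by
    refine (MeasurableSet.iUnion (fun q => hHmeas (n * q))).diff ?_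
    exact MeasurableSet.biUnion (Finset.Ico 1 n).countable_toSet
      (fun m _ => (hσ.iterate m) hBmeas)
  have hAmem : ∀ x : Ω, x ∈ A ↔
      ((∃ q : ℕ, x ∈ H (n * q)) ∧ ∀ m, 1 ≤ m → m < n → σ^[m] x ∉ B) := by
    intro x
    rw [hA]
    simp only [Set.mem_diff, Set.mem_iUnion, Finset.mem_Ico, Set.mem_preimage, not_exists]
    constructor
    · rintro ⟨⟨q, hq⟩, h2⟩
      exact ⟨⟨q, hq⟩, fun m hm1 hm2 hB => h2 m ⟨hm1, hm2⟩ hB⟩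
    · rintro ⟨⟨q, hq⟩, h2⟩
      exact ⟨⟨q, hq⟩, fun m hm hB => h2 m hm.1 hm.2 hB⟩
  -- key disjointness
  have hdisjA : ∀ i j : ℕ, i < j → j < n → ∀ x : Ω, τ^[i] x ∈ A → τ^[j] x ∈ A → False := by
    intro i j hij hjn x hiA hjA
    rw [hAmem] at hiA hjA
    obtain ⟨⟨q', hq'⟩, _⟩ := hiA
    obtain ⟨⟨q, hq⟩, hjno⟩ := hjA
    rw [hHmem] at hq hq'
    set d : ℕ := j - i with hd
    have hd1 : 1 ≤ d := by omega
    have hdn : d < n := by omega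
    -- τ^[i] x ∈ H (n*q + d)
    have hclaim : τ^[i] x ∈ H (n * q + d) := by
      rw [hHmem]
      constructor
      · have : τ^[n*q + d] (τ^[i] x) = τ^[n*q] (τ^[j] x) := by
          rw [← Function.iterate_add_apply, ← Function.iterate_add_apply]
          congr 1
          omega
        rw [this]
        exact hq.1
      · intro e he hB
        rcases Nat.lt_or_ge e d with hed | hed
        · -- e < d : use the sigma-condition of τ^[j] x
          have hm1 : 1 ≤ d - e := by omega
          have hm2 : d - e < n := by omega
          have : σ^[d - e] (τ^[j] x) = τ^[e] (τ^[i] x) := by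
            rw [← Function.iterate_add_apply]
            rw [hcomp (d - e) j x (by omega)]
            congr 1
            omega
          exact hjno (d - e) hm1 hm2 (this ▸ hB)
        · -- e ≥ d : use first-hit property of τ^[j] x
          have : τ^[e] (τ^[i] x) = τ^[e - d] (τ^[j] x) := by
            rw [← Function.iterate_add_apply, ← Function.iterate_add_apply]
            congr 1
            omega
          rw [this] at hB
          exact hq.2 (e - d) (by omega) hB
    -- hence n*q' = n*q + d, contradiction with 1 ≤ d < n
    have heq : n * q' = n * q + d := by
      refine hHuniq _ _ (τ^[i] x) ?_ hclaim
      rw [hHmem]; exact hq'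
    have hqq : q < q' := by
      have h1 : n * q < n * q' := by omega
      exact Nat.lt_of_mul_lt_mul_left h1
    have h2 : n * (q + 1) ≤ n * q' := Nat.mul_le_mul_left n hqq
    have h3 : n * (q + 1) = n * q + n := by ring
    omega
  -- coverage
  have hcovA : ∀ x : Ω, x ∈ V → (∀ m, 1 ≤ m → m < n → σ^[m] x ∉ B) →
      ∃ s, s < n ∧ τ^[s] x ∈ A := by
    intro x hxV hxσ
    rw [hV, Set.mem_iUnion] at hxV
    simp only [Set.mem_preimage] at hxV
    have hex : ∃ k, τ^[k] x ∈ B := hxV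
    have hm₀ : τ^[Nat.find hex] x ∈ B := Nat.find_spec hex
    have hmin : ∀ j, j < Nat.find hex → τ^[j] x ∉ B := fun j hj => Nat.find_min hex hj
    set m₀ := Nat.find hex with hm₀def
    set s := m₀ % n with hsdef
    set q := m₀ / n with hqdef
    have hsq : n * q + s = m₀ := Nat.div_add_mod m₀ n
    have hsn : s < n := Nat.mod_lt _ (by omega)
    have hsm : s ≤ m₀ := by omega
    refine ⟨s, hsn, ?_⟩
    rw [hAmem]
    constructor
    · refine ⟨q, ?_⟩
      rw [hHmem]
      constructor
      · rw [← Function.iterate_add_apply, hsq]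
        exact hm₀
      · intro j hj hB
        rw [← Function.iterate_add_apply] at hB
        exact hmin (j + s) (by omega) hB
    · intro m hm1 hm2 hB
      rcases le_or_gt m s with hms | hms
      · rw [hcomp m s x hms] at hB
        exact hmin (s - m) (by omega) hB
      · have heq : σ^[m] (τ^[s] x) = σ^[m - s] x := by
          have h1 : σ^[m] (τ^[s] x) = σ^[m - s] (σ^[s] (τ^[s] x)) := by
            rw [← Function.iterate_add_apply]
            congr 1
            omega
          rw [h1, (hστ.iterate s) x]
        rw [heq] at hB
        exact hxσ (m - s) (by omega) (by omega) hB
  refine ⟨A, hAmeas, ?_, ?_⟩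
  · intro i j hi hj hij
    rw [Set.disjoint_left]
    intro x hxi hxj
    rcases lt_or_gt_of_ne hij with h | h
    · exact hdisjA i j h hj x hxi hxj
    · exact hdisjA j i h hi x hxj hxi
  · -- measure estimate
    have hUsub : univ \ ⋃ i ∈ Finset.range n, τ^[i] ⁻¹' A ⊆
        (univ \ V) ∪ ⋃ m ∈ Finset.Ico 1 n, σ^[m] ⁻¹' B := by
      intro x hx
      by_cases hxV : x ∈ V
      · by_cases hxB : ∃ m, 1 ≤ m ∧ m < n ∧ σ^[m] x ∈ B
        · obtain ⟨m, hm1, hm2, hm3⟩ := hxB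
          exact Or.inr (Set.mem_biUnion (Finset.mem_Ico.2 ⟨hm1, hm2⟩) hm3)
        · push_neg at hxB
          obtain ⟨s, hsn, hsA⟩ := hcovA x hxV hxB
          exact absurd (Set.mem_biUnion (Finset.mem_range.2 hsn) hsA) hx.2
      · exact Or.inl ⟨trivial, hxV⟩
    -- N * μ B ≤ 1
    have hpair : ∀ i j, i < j → j < N → Disjoint (τ^[i] ⁻¹' B) (τ^[j] ⁻¹' B) := by
      intro i j hij hjN
      rw [Set.disjoint_left]
      intro x hxi hxj
      have hmem : τ^[i] x ∈ B ∩ τ^[j - i] ⁻¹' B := by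
        refine ⟨hxi, ?_⟩
        rw [Set.mem_preimage, ← Function.iterate_add_apply, show j - i + i = j by omega]
        exact hxj
      rw [hBdisj (j - i) (by omega) (by omega)] at hmem
      exact hmem
    have hNB : (N : ℝ≥0∞) * μ B ≤ 1 := by
      have hdis : (↑(Finset.range N) : Set ℕ).PairwiseDisjoint (fun k => τ^[k] ⁻¹' B) := by
        intro i hi j hj hij
        simp only [Finset.coe_range, Set.mem_Iio] at hi hj
        rcases lt_or_gt_of_ne hij with h | h
        · exact hpair i j h hj
        · exact (hpair j i h hi).symm
      have hunion := measure_biUnion_finset (μ := μ) hdis (fun k _ => (hτ.iterate k) hBmeas)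
      have hsum : ∑ k ∈ Finset.range N, μ (τ^[k] ⁻¹' B) = N * μ B := by
        rw [Finset.sum_congr rfl (fun k _ => iter_mp μ τ hτ hmpτ k B hBmeas)]
        rw [Finset.sum_const, Finset.card_range, nsmul_eq_mul]
      calc (N : ℝ≥0∞) * μ B = μ (⋃ k ∈ Finset.range N, τ^[k] ⁻¹' B) := by
            rw [hunion, hsum]
        _ ≤ 1 := prob_le_one
    have hμB : μ B ≤ (N : ℝ≥0∞)⁻¹ := by
      rw [ENNReal.le_inv_iff_mul_le, mul_comm]
      exact hNB
    have hμU : μ (univ \ ⋃ i ∈ Finset.range n, τ^[i] ⁻¹' A) ≤ (n : ℝ≥0∞) * μ B := by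
      calc μ (univ \ ⋃ i ∈ Finset.range n, τ^[i] ⁻¹' A)
          ≤ μ ((univ \ V) ∪ ⋃ m ∈ Finset.Ico 1 n, σ^[m] ⁻¹' B) := measure_mono hUsub
        _ ≤ μ (univ \ V) + μ (⋃ m ∈ Finset.Ico 1 n, σ^[m] ⁻¹' B) := measure_union_le _ _
        _ = μ (⋃ m ∈ Finset.Ico 1 n, σ^[m] ⁻¹' B) := by rw [hWnull, zero_add]
        _ ≤ ∑ m ∈ Finset.Ico 1 n, μ (σ^[m] ⁻¹' B) := measure_biUnion_finset_le _ _
        _ = ∑ m ∈ Finset.Ico 1 n, μ B :=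
            Finset.sum_congr rfl (fun m _ => iter_mp μ σ hσ hmpσ m B hBmeas)
        _ = ((n - 1 : ℕ) : ℝ≥0∞) * μ B := by
            rw [Finset.sum_const, Nat.card_Ico, nsmul_eq_mul]
        _ ≤ (n : ℝ≥0∞) * μ B := by
            refine mul_le_mul_left ?_ _
            exact_mod_cast Nat.sub_le n 1
    have hfinal : (n : ℝ≥0∞) * μ B < ENNReal.ofReal ε := by
      have h1 : (n : ℝ≥0∞) * μ B ≤ (n : ℝ≥0∞) * (N : ℝ≥0∞)⁻¹ := mul_le_mul_right hμB _
      have hN0 : (0 : ℝ) < N := by exact_mod_cast hNpos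
      have h2 : (n : ℝ≥0∞) * (N : ℝ≥0∞)⁻¹ = ENNReal.ofReal ((n : ℝ) / N) := by
        rw [ENNReal.ofReal_div_of_pos hN0, ENNReal.ofReal_natCast, ENNReal.ofReal_natCast,
          div_eq_mul_inv]
      have h3 : (n : ℝ) / N < ε := by
        rw [div_lt_iff₀ hN0]
        have := (div_lt_iff₀ hε).1 hNgt
        linarith [mul_comm ε (N : ℝ)]
      calc (n : ℝ≥0∞) * μ B ≤ ENNReal.ofReal ((n : ℝ) / N) := h2 ▸ h1
        _ < ENNReal.ofReal ε := (ENNReal.ofReal_lt_ofReal_iff hε).2 h3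
    exact lt_of_le_of_lt hμU hfinal
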